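/- Let I ⊆ R be a cointerval squarefree monomial ideal generated in degree d with minimal generators ordered lexicographically decreasing, and let m = x_{i_1}x_{i_2}⋯x_{i_d} ∈ G(I) with i_1 < ⋯ < i_d. Then set(m) = {j ∈ {1,…,n} : j < i_1, or for some t ≥ 1, i_t < j < i_{t+1} and x_{i_1}⋯x_{i_t}·x_j·x_{i_{t+2}}⋯x_{i_d} ∈ I}. -/

import Mathlib

open MvPolynomial

/-- The monomial ideal generated by a set of exponent vectors. -/
noncomputable def genIdeal (K : Type*) [Field K] {n : ℕ} (ms : Set (Fin n →₀ ℕ)) :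
    Ideal (MvPolynomial (Fin n) K) :=
  Ideal.span ((fun u => MvPolynomial.monomial u (1 : K)) '' ms)

/-- The colon ideal `⟨m_1, …, m_{j-1}⟩ : m_j`. -/
noncomputable def colonJ (K : Type*) [Field K] {n k : ℕ} (m : Fin k → (Fin n →₀ ℕ))
    (j : Fin k) : Ideal (MvPolynomial (Fin n) K) :=
  Submodule.colon (genIdeal K {u | ∃ i : Fin k, i < j ∧ u = m i})
    (Ideal.span {MvPolynomial.monomial (m j) (1 : K)})

/-- `I` has linear quotients w.r.t. the ordering `m_1,…,m_k` of its generators: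
each colon ideal is generated by a subset of the variables. -/
def HasLinearQuotients (K : Type*) [Field K] {n k : ℕ}
    (m : Fin k → (Fin n →₀ ℕ)) : Prop :=
  ∀ j : Fin k, ∃ S : Set (Fin n),
    colonJ K m j = Ideal.span ((fun s => (MvPolynomial.X s : MvPolynomial (Fin n) K)) '' S)

/-- `set(m_j) = {i : x_i ∈ ⟨m_1,…,m_{j-1}⟩ : m_j}`. -/
def mset (K : Type*) [Field K] {n k : ℕ} (m : Fin k → (Fin n →₀ ℕ)) (j : Fin k) :
    Set (Fin n) :=
  {t | (MvPolynomial.X t : MvPolynomial (Fin n) K) ∈ colonJ K m j}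

/-- The `m i` are minimal monomial generators: none divides another. -/
def MinimalGens {n k : ℕ} (m : Fin k → (Fin n →₀ ℕ)) : Prop :=
  ∀ i j : Fin k, m i ≤ m j → i = j

/-- `b` is the decomposition function: for a monomial `u ∈ I`, `b u` is the smallest
index `j` with `u ∈ ⟨m_1,…,m_j⟩`. -/
def IsDecompositionFunction (K : Type*) [Field K] {n k : ℕ}
    (m : Fin k → (Fin n →₀ ℕ)) (b : (Fin n →₀ ℕ) → Fin k) : Prop :=
  ∀ u : Fin n →₀ ℕ, MvPolynomial.monomial u (1 : K) ∈ genIdeal K (Set.range m) →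
    (MvPolynomial.monomial u (1 : K) ∈ genIdeal K {v | ∃ i : Fin k, i ≤ b u ∧ v = m i}) ∧
    (∀ j : Fin k,
      MvPolynomial.monomial u (1 : K) ∈ genIdeal K {v | ∃ i : Fin k, i ≤ j ∧ v = m i} →
      b u ≤ j)

/-- The decomposition function is regular: `set(b(x_t·m)) ⊆ set(m)` for every
generator `m` and every `t ∈ set(m)`. -/
def IsRegularDecomp (K : Type*) [Field K] {n k : ℕ}
    (m : Fin k → (Fin n →₀ ℕ)) (b : (Fin n →₀ ℕ) → Fin k) : Prop :=
  ∀ j : Fin k, ∀ t ∈ mset K m j,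
    mset K m (b (m j + Finsupp.single t 1)) ⊆ mset K m j

/-- The exponent vector of the squarefree monomial `x_{f 0} ⋯ x_{f (d-1)}`. -/
noncomputable def vecOfFin {n d : ℕ} (f : Fin d → Fin n) : Fin n →₀ ℕ :=
  ∑ l : Fin d, Finsupp.single (f l) 1

/-- The exchange property defining cointerval ideals: for every squarefree monomial
`x_{i_1}⋯x_{i_d} ∈ I` (`i_1 < … < i_d`), every `t ≤ d` and all `j_1 < … < j_t` with
`j_s ≤ i_s` and `{j_1,…,j_t} ∩ {i_{t+1},…,i_d} = ∅`, the monomial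
`x_{j_1}⋯x_{j_t}·x_{i_{t+1}}⋯x_{i_d}` also lies in `I`. -/
def CointervalIdeal (K : Type*) [Field K] {n : ℕ} (d : ℕ)
    (I : Ideal (MvPolynomial (Fin n) K)) : Prop :=
  ∀ f : Fin d → Fin n, StrictMono f →
    MvPolynomial.monomial (vecOfFin f) (1 : K) ∈ I →
    ∀ (t : ℕ) (ht : t ≤ d), ∀ g : Fin t → Fin n, StrictMono g →
      (∀ s : Fin t, g s ≤ f (Fin.castLE ht s)) →
      (∀ (s : Fin t) (l : Fin d), t ≤ (l : ℕ) → g s ≠ f l) →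
      MvPolynomial.monomial
          ((∑ s : Fin t, Finsupp.single (g s) 1) +
            ∑ l ∈ Finset.univ.filter (fun l : Fin d => t ≤ (l : ℕ)),
              Finsupp.single (f l) 1) (1 : K) ∈ I

/-- `u >_lex v` for exponent vectors: at the smallest index where they differ, `u` is
larger. -/
def lexGt {n : ℕ} (u v : Fin n →₀ ℕ) : Prop :=
  ∃ i : Fin n, (∀ j : Fin n, j < i → u j = v j) ∧ v i < u i

/-- The generators are listed in lexicographically decreasing order. -/
def LexDec {n k : ℕ} (m : Fin k → (Fin n →₀ ℕ)) : Prop :=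
  ∀ a b : Fin k, a < b → lexGt (m a) (m b)

/-- `u` is the exponent vector of a squarefree monomial of degree `d`. -/
def SqFreeDeg {n : ℕ} (d : ℕ) (u : Fin n →₀ ℕ) : Prop :=
  (∀ a : Fin n, u a ≤ 1) ∧ u.support.card = d

open scoped Classical

lemma mem_genIdeal_iff (K : Type*) [Field K] {n : ℕ} (ms : Set (Fin n →₀ ℕ)) (u : Fin n →₀ ℕ) :
    MvPolynomial.monomial u (1 : K) ∈ genIdeal K ms ↔ ∃ v ∈ ms, v ≤ u := by
  rw [genIdeal, mem_ideal_span_monomial_image]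
  simp [support_monomial, (one_ne_zero : (1:K) ≠ 0)]

lemma mset_iff (K : Type*) [Field K] {n k : ℕ} (m : Fin k → (Fin n →₀ ℕ)) (j : Fin k)
    (a : Fin n) :
    a ∈ mset K m j ↔ ∃ i : Fin k, i < j ∧ m i ≤ Finsupp.single a 1 + m j := by
  show (MvPolynomial.X a : MvPolynomial (Fin n) K) ∈ colonJ K m j ↔ _
  rw [colonJ, ← Ideal.submodule_span_eq, Submodule.mem_colon_span_singleton, smul_eq_mul, X, monomial_mul, one_mul,
    mem_genIdeal_iff]
  constructor
  · rintro ⟨v, ⟨i, hij, rfl⟩, hle⟩; exact ⟨i, hij, hle⟩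
  · rintro ⟨i, hij, hle⟩; exact ⟨m i, ⟨i, hij, rfl⟩, hle⟩

lemma sum_single_apply {α : Type*} {n : ℕ} (T : Finset α) (φ : α → Fin n)
    (hφ : Set.InjOn φ T) (b : Fin n) :
    (∑ l ∈ T, Finsupp.single (φ l) (1:ℕ)) b = if ∃ l ∈ T, φ l = b then 1 else 0 := by
  rw [Finsupp.finset_sum_apply]
  by_cases h : ∃ l ∈ T, φ l = b
  · obtain ⟨l0, hl0, hval⟩ := h
    rw [if_pos ⟨l0, hl0, hval⟩, Finset.sum_eq_single_of_mem l0 hl0]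
    · simp [hval]
    · intro l hl hne
      rw [Finsupp.single_apply, if_neg]
      intro hc
      exact hne (hφ hl hl0 (by rw [hval, hc]))
  · rw [if_neg h, Finset.sum_eq_zero]
    intro l hl
    rw [Finsupp.single_apply, if_neg fun hc => h ⟨l, hl, hc⟩]

lemma vecOfFin_apply {n d : ℕ} (f : Fin d → Fin n) (hf : Function.Injective f) (b : Fin n) :
    vecOfFin f b = if ∃ l, f l = b then 1 else 0 := by
  rw [vecOfFin, sum_single_apply Finset.univ f (hf.injOn) b]
  simp

lemma vecOfFin_sqfree {n d : ℕ} (f : Fin d → Fin n) (hf : Function.Injective f) :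
    SqFreeDeg d (vecOfFin f) := by
  constructor
  · intro a; rw [vecOfFin_apply f hf]; split <;> omega
  · have : (vecOfFin f).support = Finset.univ.image f := by
      ext b
      rw [Finsupp.mem_support_iff, vecOfFin_apply f hf]
      simp only [Finset.mem_image, Finset.mem_univ, true_and]
      split <;> simp_all
    rw [this, Finset.card_image_of_injective _ hf, Finset.card_univ, Fintype.card_fin]

lemma sqfree_eq {n d : ℕ} {u v : Fin n →₀ ℕ} (hu : SqFreeDeg d u) (hv : SqFreeDeg d v)
    (h : u ≤ v) : u = v := by
  have hsub : u.support ⊆ v.support := by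
    intro b hb
    rw [Finsupp.mem_support_iff] at hb ⊢
    have := h b
    omega
  have hsup : u.support = v.support :=
    Finset.eq_of_subset_of_card_le hsub (by rw [hu.2, hv.2])
  ext b
  by_cases hb : b ∈ v.support
  · have hb' : b ∈ u.support := hsup ▸ hb
    rw [Finsupp.mem_support_iff] at hb hb'
    have h1 := hu.1 b; have h2 := hv.1 b; have := h b; omega
  · have hb' : b ∉ u.support := hsup ▸ hb
    rw [Finsupp.notMem_support_iff] at hb hb'
    rw [hb, hb']

lemma lexGt_asymm {n : ℕ} {u v : Fin n →₀ ℕ} (h1 : lexGt u v) (h2 : lexGt v u) : False := by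
  obtain ⟨i, hi, hi2⟩ := h1
  obtain ⟨c, hc, hc2⟩ := h2
  rcases lt_trichotomy i c with h | h | h
  · have := hc i h; omega
  · subst h; omega
  · have := hi c h; omega

lemma lexGt_lt {n k : ℕ} {m : Fin k → (Fin n →₀ ℕ)} (hlex : LexDec m) {i j : Fin k}
    (h : lexGt (m i) (m j)) : i < j := by
  rcases lt_trichotomy i j with hh | hh | hh
  · exact hh
  · subst hh; obtain ⟨c, -, hc⟩ := h; omega
  · exact absurd (hlex j i hh) fun h' => lexGt_asymm h h'


lemma update_strictMono {n d : ℕ} {f : Fin d → Fin n} (hf : StrictMono f) {q : Fin d}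
    {a : Fin n} (hlow : ∀ l : Fin d, l < q → f l < a) (hhigh : a < f q) :
    StrictMono (Function.update f q a) := by
  intro p r hpr
  rcases eq_or_ne p q with hpq | hp <;> rcases eq_or_ne r q with hrq | hr
  · exact absurd (hpq ▸ hrq ▸ hpr) (lt_irrefl _)
  · rw [hpq, Function.update_self, Function.update_of_ne hr]
    exact hhigh.trans (hf (hpq ▸ hpr))
  · rw [Function.update_of_ne hp, hrq, Function.update_self]
    exact hlow p (hrq ▸ hpr)
  · rw [Function.update_of_ne hp, Function.update_of_ne hr]
    exact hf hpr

lemma exp_eq {n d : ℕ} {f : Fin d → Fin n} (hf : Function.Injective f) (c : ℕ) (hcd : c < d)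
    (a : Fin n) (ha : ∀ l, f l ≠ a)
    (g : Fin (c + 1) → Fin n)
    (hg1 : ∀ (p : Fin (c + 1)) (hp : (p : ℕ) < c), g p = f ⟨p, hp.trans hcd⟩)
    (hg2 : ∀ p : Fin (c + 1), (p : ℕ) = c → g p = a)
    (hginj : Function.Injective g) :
    ((∑ s : Fin (c + 1), Finsupp.single (g s) 1) +
      ∑ l ∈ Finset.univ.filter (fun l : Fin d => c + 1 ≤ (l : ℕ)),
        Finsupp.single (f l) 1)
    = vecOfFin (Function.update f ⟨c, hcd⟩ a) := by
  have hui : Function.Injective (Function.update f ⟨c, hcd⟩ a) := by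
    intro x y hxy
    rcases eq_or_ne x ⟨c, hcd⟩ with rfl | hx <;> rcases eq_or_ne y ⟨c, hcd⟩ with rfl | hy
    · rfl
    · rw [Function.update_self, Function.update_of_ne hy] at hxy
      exact absurd hxy.symm (ha y)
    · rw [Function.update_of_ne hx, Function.update_self] at hxy
      exact absurd hxy (ha x)
    · rw [Function.update_of_ne hx, Function.update_of_ne hy] at hxy
      exact hf hxy
  ext b
  have hsum1 := sum_single_apply Finset.univ g hginj.injOn b
  have hsum2 := sum_single_apply (Finset.univ.filter (fun l : Fin d => c + 1 ≤ (l : ℕ)))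
    f hf.injOn b
  rw [Finsupp.add_apply, hsum1, hsum2, vecOfFin_apply _ hui]
  have hQ : (∃ l, Function.update f ⟨c, hcd⟩ a l = b) ↔
      ((∃ p ∈ Finset.univ, g p = b) ∨
        (∃ l ∈ Finset.univ.filter (fun l : Fin d => c + 1 ≤ (l : ℕ)), f l = b)) := by
    constructor
    · rintro ⟨l, hl⟩
      rcases eq_or_ne l ⟨c, hcd⟩ with rfl | hlq
      · rw [Function.update_self] at hl
        exact Or.inl ⟨⟨c, Nat.lt_succ_self c⟩, Finset.mem_univ _, by rw [hg2 _ rfl, hl]⟩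
      · rw [Function.update_of_ne hlq] at hl
        have hlc : (l : ℕ) ≠ c := fun hc => hlq (Fin.ext hc)
        rcases lt_or_gt_of_ne hlc with hlt | hgt
        · refine Or.inl ⟨⟨(l : ℕ), by omega⟩, Finset.mem_univ _, ?_⟩
          rw [hg1 _ hlt]
          convert hl using 2
        · exact Or.inr ⟨l, by simp only [Finset.mem_filter, Finset.mem_univ, true_and]; omega, hl⟩
    · rintro (⟨p, -, hp⟩ | ⟨l, hl, hfl⟩)
      · rcases lt_or_ge ((p : ℕ)) c with hpc | hpc
        · refine ⟨⟨(p : ℕ), hpc.trans hcd⟩, ?_⟩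
          rw [Function.update_of_ne (fun hc => by
            have := Fin.mk.injEq (p:ℕ) (hpc.trans hcd) c hcd ▸ hc
            omega)]
          rw [hg1 _ hpc] at hp
          exact hp
        · have hpc' : (p : ℕ) = c := by have := p.isLt; omega
          exact ⟨⟨c, hcd⟩, by rw [Function.update_self, ← hg2 _ hpc']; exact hp⟩
      · simp only [Finset.mem_filter, Finset.mem_univ, true_and] at hl
        refine ⟨l, ?_⟩
        rw [Function.update_of_ne (fun hc => by rw [hc] at hl; exact absurd hl (by simp))]
        exact hfl
  have hdisj : ¬((∃ p ∈ Finset.univ, g p = b) ∧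
      (∃ l ∈ Finset.univ.filter (fun l : Fin d => c + 1 ≤ (l : ℕ)), f l = b)) := by
    rintro ⟨⟨p, -, hp⟩, ⟨l, hl, hfl⟩⟩
    simp only [Finset.mem_filter, Finset.mem_univ, true_and] at hl
    rcases lt_or_ge ((p : ℕ)) c with hpc | hpc
    · rw [hg1 _ hpc] at hp
      have : (⟨(p : ℕ), hpc.trans hcd⟩ : Fin d) = l := hf (hp.trans hfl.symm)
      have := congrArg Fin.val this
      simp at this; omega
    · have hpc' : (p : ℕ) = c := by have := p.isLt; omega
      rw [hg2 _ hpc'] at hp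
      exact ha l (hfl.trans hp.symm)
  by_cases hP1 : ∃ p ∈ Finset.univ, g p = b <;>
    by_cases hP2 : ∃ l ∈ Finset.univ.filter (fun l : Fin d => c + 1 ≤ (l : ℕ)), f l = b
  · exact absurd ⟨hP1, hP2⟩ hdisj
  · rw [if_pos hP1, if_neg hP2, if_pos (hQ.2 (Or.inl hP1))]
  · rw [if_neg hP1, if_pos hP2, if_pos (hQ.2 (Or.inr hP2))]
  · rw [if_neg hP1, if_neg hP2, if_neg (fun hq => (hQ.1 hq).elim hP1 hP2)]

lemma key {K : Type*} [Field K] {n kk d : ℕ} {m : Fin kk → (Fin n →₀ ℕ)}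
    (hsf : ∀ j : Fin kk, SqFreeDeg d (m j)) (hlex : LexDec m) {j : Fin kk}
    {f : Fin d → Fin n} (hf : StrictMono f) (hmj : m j = vecOfFin f) (q : Fin d) (a : Fin n)
    (hlow : ∀ l : Fin d, l < q → f l < a) (hhigh : a < f q)
    (hmem : MvPolynomial.monomial (vecOfFin (Function.update f q a)) (1 : K) ∈
      genIdeal K (Set.range m)) :
    ∃ i : Fin kk, i < j ∧ m i ≤ Finsupp.single a 1 + m j := by
  have hupd : StrictMono (Function.update f q a) := update_strictMono hf hlow hhigh
  have hna : ∀ l : Fin d, f l ≠ a := by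
    intro l
    rcases lt_trichotomy l q with h | rfl | h
    · exact (hlow l h).ne
    · exact hhigh.ne'
    · exact ((hhigh.trans (hf h))).ne'
  obtain ⟨v, ⟨i, rfl⟩, hile⟩ := (mem_genIdeal_iff K _ _).1 hmem
  have hieq : m i = vecOfFin (Function.update f q a) :=
    sqfree_eq (hsf i) (vecOfFin_sqfree _ hupd.injective) hile
  have hmja : ∀ b, m j b = if ∃ l, f l = b then 1 else 0 := fun b => by
    rw [hmj, vecOfFin_apply f hf.injective]
  have hja : m j a = 0 := by
    rw [hmja, if_neg (fun ⟨l, hl⟩ => hna l hl)]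
  have hvia : ∀ b, m i b = if ∃ l, Function.update f q a l = b then 1 else 0 := fun b => by
    rw [hieq, vecOfFin_apply _ hupd.injective]
  have hgt : lexGt (m i) (m j) := by
    refine ⟨a, fun b hb => ?_, ?_⟩
    · rw [hvia, hmja]
      refine if_congr ⟨?_, ?_⟩ rfl rfl
      · rintro ⟨l, hl⟩
        rcases eq_or_ne l q with hlq | hlq
        · rw [hlq, Function.update_self] at hl
          exact absurd (hl ▸ hb) (lt_irrefl _)
        · rw [Function.update_of_ne hlq] at hl
          exact ⟨l, hl⟩
      · rintro ⟨l, hl⟩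
        have hlq : l ≠ q := by
          rintro rfl
          exact absurd ((hl ▸ hb).trans hhigh) (lt_irrefl _)
        exact ⟨l, by rw [Function.update_of_ne hlq]; exact hl⟩
    · rw [hja, hvia, if_pos ⟨q, Function.update_self _ _ _⟩]
      omega
  refine ⟨i, lexGt_lt hlex hgt, ?_⟩
  intro b
  rw [Finsupp.add_apply, hvia, hmja, Finsupp.single_apply]
  by_cases hQ : ∃ l, Function.update f q a l = b
  · obtain ⟨l, hl⟩ := hQ
    have hQ' : ∃ l, Function.update f q a l = b := ⟨l, hl⟩
    rcases eq_or_ne l q with hlq | hlq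
    · rw [hlq, Function.update_self] at hl
      rw [if_pos hQ', if_pos hl]
      omega
    · rw [Function.update_of_ne hlq] at hl
      have hP : ∃ l, f l = b := ⟨l, hl⟩
      rw [if_pos hQ', if_pos hP]
      omega
  · rw [if_neg hQ]
    omega

/-- for a cointerval squarefree ideal generated in degree `d` (generators
lex-decreasing) and `m = x_{i_1}⋯x_{i_d} ∈ G(I)` with `i_1 < … < i_d` (here `i_{s+1}`
is `f s`, 0-based), one has
`set(m) = {j : j < i_1, or ∃ t ≥ 1 with i_t < j < i_{t+1} and
x_{i_1}⋯x_{i_t}·x_j·x_{i_{t+2}}⋯x_{i_d} ∈ I}`. -/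
theorem stmt14 (K : Type*) [Field K] {n k d : ℕ} (hd : 0 < d)
    (m : Fin k → (Fin n →₀ ℕ))
    (hsf : ∀ j : Fin k, SqFreeDeg d (m j))
    (hlex : LexDec m)
    (hco : CointervalIdeal K d (genIdeal K (Set.range m)))
    (j : Fin k) (f : Fin d → Fin n) (hf : StrictMono f) (hmj : m j = vecOfFin f) :
    mset K m j =
      {a : Fin n |
        a < f ⟨0, hd⟩ ∨
        ∃ (s : ℕ) (h : s + 1 < d),
          f ⟨s, Nat.lt_of_succ_lt h⟩ < a ∧ a < f ⟨s + 1, h⟩ ∧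
          MvPolynomial.monomial (vecOfFin (Function.update f ⟨s + 1, h⟩ a)) (1 : K) ∈
            genIdeal K (Set.range m)} := by
  have hI : MvPolynomial.monomial (vecOfFin f) (1 : K) ∈ genIdeal K (Set.range m) := by
    rw [← hmj]
    exact (mem_genIdeal_iff K _ _).2 ⟨m j, ⟨j, rfl⟩, le_refl _⟩
  have hmja : ∀ b, m j b = if ∃ l, f l = b then 1 else 0 := fun b => by
    rw [hmj, vecOfFin_apply f hf.injective]
  ext a
  rw [Set.mem_setOf_eq, mset_iff]
  constructor
  · rintro ⟨i, hij, hle⟩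
    obtain ⟨c, hagree, hcgt⟩ := hlex i j hij
    have hca : c = a := by
      have h1 := hle c
      rw [Finsupp.add_apply, Finsupp.single_apply] at h1
      by_contra hne
      rw [if_neg (fun hh => hne hh.symm)] at h1
      omega
    rw [hca] at hagree hcgt
    have hile := hle a
    rw [Finsupp.add_apply, Finsupp.single_apply, if_pos rfl] at hile
    have hsqi := (hsf i).1 a
    have hja : m j a = 0 := by omega
    have hnoa : ∀ l : Fin d, f l ≠ a := by
      intro l hl
      rw [hmja a, if_pos ⟨l, hl⟩] at hja
      omega
    have hup : ∃ r : Fin d, a < f r := by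
      by_contra hno
      push_neg at hno
      have hall : ∀ r : Fin d, f r < a := fun r => lt_of_le_of_ne (hno r) (hnoa r)
      have hsubs : insert a (Finset.univ.image f) ⊆ (m i).support := by
        intro b hb
        rw [Finset.mem_insert] at hb
        rw [Finsupp.mem_support_iff]
        rcases hb with rfl | hb
        · omega
        · obtain ⟨l, -, rfl⟩ := Finset.mem_image.1 hb
          rw [hagree (f l) (hall l), hmja, if_pos ⟨l, rfl⟩]
          omega
      have h2 : (insert a (Finset.univ.image f)).card = d + 1 := by
        rw [Finset.card_insert_of_notMem (fun hmem' => by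
            obtain ⟨l, -, hl⟩ := Finset.mem_image.1 hmem'
            exact hnoa l hl),
          Finset.card_image_of_injective _ hf.injective, Finset.card_univ, Fintype.card_fin]
      have hcard := Finset.card_le_card hsubs
      rw [h2, (hsf i).2] at hcard
      omega
    by_cases hlt0 : a < f ⟨0, hd⟩
    · exact Or.inl hlt0
    right
    have h0a : f ⟨0, hd⟩ < a := lt_of_le_of_ne (not_lt.1 hlt0) (hnoa ⟨0, hd⟩)
    have hSne : (Finset.univ.filter (fun l : Fin d => f l < a)).Nonempty :=
      ⟨⟨0, hd⟩, by simp [h0a]⟩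
    set L := (Finset.univ.filter (fun l : Fin d => f l < a)).max' hSne with hL
    have hLlt : f L < a := by
      have hmm := (Finset.univ.filter (fun l : Fin d => f l < a)).max'_mem hSne
      rw [Finset.mem_filter] at hmm
      exact hmm.2
    obtain ⟨r, hr⟩ := hup
    have hLr : (L : ℕ) < (r : ℕ) := hf.lt_iff_lt.1 (hLlt.trans hr)
    have hs1 : (L : ℕ) + 1 < d := by have := r.isLt; omega
    have hfs1 : a < f ⟨(L : ℕ) + 1, hs1⟩ := by
      have hnotin : (⟨(L : ℕ) + 1, hs1⟩ : Fin d) ∉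
          Finset.univ.filter (fun l : Fin d => f l < a) := by
        intro hc
        have hle' := Finset.le_max' _ _ hc
        rw [← hL, Fin.le_def] at hle'
        simp at hle'
      have h1 : ¬ f ⟨(L : ℕ) + 1, hs1⟩ < a := fun hc => hnotin (by simp [hc])
      exact lt_of_le_of_ne (not_lt.1 h1) (fun hc => hnoa _ hc.symm)
    refine ⟨(L : ℕ), hs1, hLlt, hfs1, ?_⟩
    set c : ℕ := (L : ℕ) + 1 with hc
    set g : Fin (c + 1) → Fin n :=
      fun p => if hp : (p : ℕ) < c then f ⟨(p : ℕ), hp.trans hs1⟩ else a with hgdef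
    have hg1 : ∀ (p : Fin (c + 1)) (hp : (p : ℕ) < c), g p = f ⟨(p : ℕ), hp.trans hs1⟩ := by
      intro p hp
      simp only [hgdef]
      rw [dif_pos hp]
    have hg2 : ∀ p : Fin (c + 1), (p : ℕ) = c → g p = a := by
      intro p hp
      simp only [hgdef]
      rw [dif_neg (by omega)]
    have hgmono : StrictMono g := by
      intro p r' hpr
      have hpr' : (p : ℕ) < (r' : ℕ) := Fin.lt_def.1 hpr
      by_cases hp : (p : ℕ) < c <;> by_cases hr' : (r' : ℕ) < c
      · rw [hg1 p hp, hg1 r' hr']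
        exact hf (Fin.lt_def.2 hpr')
      · rw [hg1 p hp, hg2 r' (by have := r'.isLt; omega)]
        refine lt_of_le_of_lt (hf.monotone ?_) hLlt
        rw [Fin.le_def]
        have : (p : ℕ) ≤ (L : ℕ) := by omega
        exact this
      · omega
      · have := p.isLt; have := r'.isLt; omega
    have hgle : ∀ s' : Fin (c + 1), g s' ≤ f (Fin.castLE (show c + 1 ≤ d by omega) s') := by
      intro s'
      by_cases hp : (s' : ℕ) < c
      · rw [hg1 s' hp]
        exact le_of_eq (congrArg f (Fin.ext rfl))
      · rw [hg2 s' (by have := s'.isLt; omega)]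
        have hcast : Fin.castLE (show c + 1 ≤ d by omega) s' = ⟨(L : ℕ) + 1, hs1⟩ :=
          Fin.ext (by have := s'.isLt; simp [Fin.castLE]; omega)
        rw [hcast]
        exact hfs1.le
    have hgne : ∀ (s' : Fin (c + 1)) (l : Fin d), c + 1 ≤ (l : ℕ) → g s' ≠ f l := by
      intro s' l hl
      by_cases hp : (s' : ℕ) < c
      · rw [hg1 s' hp]
        exact ne_of_lt (hf (Fin.lt_def.2 (by simp; omega)))
      · rw [hg2 s' (by have := s'.isLt; omega)]
        refine ne_of_lt (lt_of_lt_of_le hfs1 (hf.monotone ?_))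
        rw [Fin.le_def]
        simp [hc]
        omega
    have hres := hco f hf hI (c + 1) (by omega) g hgmono hgle hgne
    rw [exp_eq hf.injective c hs1 a hnoa g hg1 hg2 hgmono.injective] at hres
    exact hres
  · rintro (hlt | ⟨s, h, h1, h2, hmem⟩)
    · have hnoa : ∀ l : Fin d, f l ≠ a := by
        intro l hl
        have h0l : f ⟨0, hd⟩ ≤ f l := hf.monotone (by rw [Fin.le_def]; exact Nat.zero_le _)
        rw [hl] at h0l
        exact absurd (hlt.trans_le h0l) (lt_irrefl a)
      set g : Fin 1 → Fin n := fun _ => a with hgdef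
      have hg1 : ∀ (p : Fin 1) (hp : (p : ℕ) < 0), g p = f ⟨(p : ℕ), hp.trans hd⟩ := by
        intro p hp
        omega
      have hg2 : ∀ p : Fin 1, (p : ℕ) = 0 → g p = a := fun p _ => rfl
      have hgmono : StrictMono g := by
        intro p q hpq
        have := Fin.lt_def.1 hpq
        have := p.isLt; have := q.isLt
        omega
      have hgle : ∀ s' : Fin 1, g s' ≤ f (Fin.castLE (show 1 ≤ d by omega) s') := by
        intro s'
        have hcast : Fin.castLE (show 1 ≤ d by omega) s' = ⟨0, hd⟩ :=
          Fin.ext (by simp)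
        rw [hcast]
        exact hlt.le
      have hgne : ∀ (s' : Fin 1) (l : Fin d), 1 ≤ (l : ℕ) → g s' ≠ f l :=
        fun s' l _ hl => hnoa l hl.symm
      have hres := hco f hf hI 1 (by omega) g hgmono hgle hgne
      rw [exp_eq hf.injective 0 hd a hnoa g hg1 hg2 hgmono.injective] at hres
      exact key hsf hlex hf hmj ⟨0, hd⟩ a
        (fun l hl => absurd (Fin.lt_def.1 hl) (by simp)) hlt hres
    · exact key hsf hlex hf hmj ⟨s + 1, h⟩ a
        (fun l hl => lt_of_le_of_lt
          (hf.monotone (show l ≤ ⟨s, Nat.lt_of_succ_lt h⟩ from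
            Fin.le_def.2 (by have := Fin.lt_def.1 hl; simp at this ⊢; omega))) h1)
        h2 hmem
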